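/- Let E ⊆ Y be a finite-dimensional subspace, P_E the orthogonal projection of Y onto E, P_{E⊥} = I − P_E, and let ṽ_E ∈ Y be a global minimizer over Y of the functional J_E(v) = (1/2)‖L*v‖² + ε‖P_{E⊥} v‖ − ⟨f, v⟩. Then the approximate solution u_E = L*ṽ_E matches the target on E: P_E(L(L*ṽ_E)) = P_E(f). -/

import Mathlib

open RealInnerProductSpace ContinuousLinearMap

/-- For a global minimizer ṽ_E of J_E(v) = (1/2)‖L*v‖² + ε‖P_{E⊥}v‖ − ⟨f, v⟩,
the approximate solution u_E = L*ṽ_E matches the target on E: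
P_E(L(L*ṽ_E)) = P_E(f). -/
theorem finite_dimensional_exact_matching
    {X Y : Type*} [NormedAddCommGroup X] [InnerProductSpace ℝ X] [CompleteSpace X]
    [NormedAddCommGroup Y] [InnerProductSpace ℝ Y] [CompleteSpace Y]
    (L : X →L[ℝ] Y) (hinj : Function.Injective (adjoint L))
    (f : Y) (ε : ℝ) (hε : 0 < ε)
    (E : Submodule ℝ Y) [FiniteDimensional ℝ E]
    (JE : Y → ℝ)
    (hJE : JE = fun v => (1/2) * ‖adjoint L v‖^2
        + ε * ‖v - (E.orthogonalProjection v : Y)‖ - ⟪f, v⟫)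
    (vE : Y) (hmin : ∀ v : Y, JE vE ≤ JE v) :
    E.orthogonalProjection (L (adjoint L vE)) = E.orthogonalProjection f := by
  -- key: the residual is orthogonal to E
  have hb : ∀ w ∈ E, ⟪L (adjoint L vE) - f, w⟫ = 0 := by
    intro w hw
    have key : ∀ t : ℝ, 0 ≤ ((1/2) * ‖adjoint L w‖^2) * t^2
        + (⟪adjoint L vE, adjoint L w⟫ - ⟪f, w⟫) * t := by
      intro t
      have h := hmin (vE + t • w)
      have hproj : (E.orthogonalProjection (vE + t • w) : Y)
          = (E.orthogonalProjection vE : Y) + t • w := by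
        rw [map_add, map_smul]
        push_cast
        rw [E.orthogonalProjectionOnto_mem_subspace_eq_self ⟨w, hw⟩]
      have hnorm : ‖adjoint L (vE + t • w)‖^2
          = ‖adjoint L vE‖^2 + 2 * (t * ⟪adjoint L vE, adjoint L w⟫)
            + t^2 * ‖adjoint L w‖^2 := by
        rw [map_add, map_smul, norm_add_sq_real, real_inner_smul_right, norm_smul]
        simp [mul_pow, sq_abs]
      have hfin : ⟪f, vE + t • w⟫ = ⟪f, vE⟫ + t * ⟪f, w⟫ := by
        rw [inner_add_right, real_inner_smul_right]
      rw [hJE] at h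
      simp only [hproj, hnorm, hfin] at h
      have heq : vE + t • w - ((E.orthogonalProjection vE : Y) + t • w)
          = vE - (E.orthogonalProjection vE : Y) := by abel
      rw [heq] at h
      nlinarith [h]
    set a : ℝ := (1/2) * ‖adjoint L w‖^2 with ha
    set b : ℝ := ⟪adjoint L vE, adjoint L w⟫ - ⟪f, w⟫ with hbdef
    have ha0 : 0 ≤ a := by positivity
    have h1 : (0:ℝ) < a + 1 := by linarith
    have ht := key (-b / (a + 1))
    have h2 : 0 ≤ (a * (-b/(a+1))^2 + b * (-b/(a+1))) * (a+1)^2 :=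
      mul_nonneg ht (by positivity)
    have h3 : (a * (-b/(a+1))^2 + b * (-b/(a+1))) * (a+1)^2
        = a * b^2 - b^2 * (a+1) := by field_simp; ring
    rw [h3] at h2
    have hb2 : b^2 = 0 := le_antisymm (by nlinarith) (sq_nonneg b)
    have hb0 : b = 0 := by
      have := sq_eq_zero_iff.mp hb2
      exact this
    have hadA : ⟪adjoint L vE, adjoint L w⟫ = ⟪L (adjoint L vE), w⟫ := by
      rw [ContinuousLinearMap.adjoint_inner_right]
    rw [inner_sub_left, ← hadA]
    linarith [hb0, hbdef]
  have hmem : L (adjoint L vE) - f ∈ Eᗮ := by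
    rw [Submodule.mem_orthogonal']
    exact hb
  have h0 : E.orthogonalProjection (L (adjoint L vE) - f) = 0 :=
    Submodule.orthogonalProjectionOnto_apply_of_mem_orthogonal hmem
  rw [map_sub] at h0
  exact sub_eq_zero.mp h0
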